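/- Let g ≥ 2 and consider qubit effects E_j = (1/2)(I_2 + t_j X_j) for t_j ∈ [0,1], where X_j = cos(jπ/g)σ_X + sin(jπ/g)σ_Y. If E_1, …, E_g are jointly measurable (as binary POVMs (E_j, I - E_j)), then Σ_{j=1}^g t_j ≤ 1/sin(π/(2g)). -/

import Mathlib

open Matrix
open scoped ComplexOrder

noncomputable def sigmaX : Matrix (Fin 2) (Fin 2) ℂ := !![0, 1; 1, 0]

noncomputable def sigmaY : Matrix (Fin 2) (Fin 2) ℂ := !![0, -Complex.I; Complex.I, 0]

/-- The planar qubit observable `X_j = cos(jπ/g)σ_X + sin(jπ/g)σ_Y`, for `j ∈ [g]`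
(here `j : Fin g` represents the integer `j+1 ∈ {1,…,g}`). -/
noncomputable def planarX (g : ℕ) (j : Fin g) : Matrix (Fin 2) (Fin 2) ℂ :=
  (Real.cos (((j : ℕ) + 1) * Real.pi / g) : ℂ) • sigmaX
    + (Real.sin (((j : ℕ) + 1) * Real.pi / g) : ℂ) • sigmaY

/-- A family `E` of POVMs on `ℂ^d` (the `i`-th having `k i` outcomes) is jointly
measurable if there is a joint POVM `G` indexed by outcome tuples whose marginals
are the `E i`. -/
def JointlyMeasurable {d g : ℕ} (k : Fin g → ℕ)
    (E : ∀ i : Fin g, Fin (k i) → Matrix (Fin d) (Fin d) ℂ) : Prop :=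
  ∃ G : (∀ i : Fin g, Fin (k i)) → Matrix (Fin d) (Fin d) ℂ,
    (∀ η, (G η).PosSemidef) ∧ (∑ η, G η = 1) ∧
      ∀ (u : Fin g) (v : Fin (k u)),
        E u v = ∑ η ∈ Finset.univ.filter (fun η : ∀ i : Fin g, Fin (k i) => η u = v), G η

section Aux

open Real Finset

/-- `|cos (x + n*π)| = |cos x|`. -/
lemma aux_abs_cos_add_int_mul_pi (x : ℝ) (n : ℤ) : |Real.cos (x + n * π)| = |Real.cos x| := by
  have h1 : Real.cos (x + n * π) = Real.cos x * Real.cos (n * π) - Real.sin x * Real.sin (n * π) :=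
    Real.cos_add x (n * π)
  have h2 : Real.sin ((n:ℝ) * π) = 0 := Real.sin_int_mul_pi n
  have h3 : Real.cos ((n:ℝ) * π) ^ 2 = 1 := by
    have := Real.sin_sq_add_cos_sq ((n:ℝ) * π); nlinarith
  have h4 : |Real.cos ((n:ℝ) * π)| = 1 := by
    nlinarith [abs_nonneg (Real.cos ((n:ℝ)*π)), sq_abs (Real.cos ((n:ℝ)*π))]
  rw [h1, h2]
  rw [mul_zero, sub_zero, abs_mul, h4, mul_one]

lemma aux_key_cos_sum (g : ℕ) (hg : 1 ≤ g) (ψ : ℝ) (h1 : -(π/2) ≤ ψ) (h2 : ψ < π/2) :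
    ∑ k ∈ range g, |Real.cos (ψ + k * (π / g))| ≤ 1 / Real.sin (π / (2 * g)) := by
  have hg0 : (0:ℝ) < g := by exact_mod_cast hg
  set δ := π / (2 * g) with hδ
  have hπ := Real.pi_pos
  have hδpos : 0 < δ := by positivity
  have hδlt : δ < π := by
    rw [hδ, div_lt_iff₀ (by positivity)]
    have h1g : (1:ℝ) ≤ g := by exact_mod_cast hg
    nlinarith [mul_pos hπ hg0]
  have hsin : 0 < Real.sin δ := Real.sin_pos_of_pos_of_lt_pi hδpos hδlt
  have hpg : π / g = 2 * δ := by rw [hδ]; field_simp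
  set F : ℕ → ℝ := fun k => Real.sin (ψ + k * (π / g) - δ) with hF
  have htel : ∀ k : ℕ, 2 * Real.sin δ * Real.cos (ψ + k * (π / g)) = F (k+1) - F k := by
    intro k
    have e1 : ψ + ((k:ℕ)+1 : ℕ) * (π / g) - δ = (ψ + k * (π/g)) + δ := by
      push_cast; rw [hpg]; ring
    have e2 : ψ + k * (π / g) - δ = (ψ + k * (π/g)) - δ := by ring
    rw [hF]; simp only []
    rw [e1, e2, Real.sin_add, Real.sin_sub]
    ring
  have hmono : ∀ j k : ℕ, j ≤ k → ψ + j * (π/g) ≤ ψ + k * (π/g) := by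
    intro j k hjk
    have : (j:ℝ) ≤ k := by exact_mod_cast hjk
    have hp : 0 ≤ π / g := by positivity
    nlinarith
  have hex : ∃ k : ℕ, π/2 < ψ + (k:ℝ) * (π/g) ∨ g ≤ k := ⟨g, Or.inr le_rfl⟩
  set m := Nat.find hex with hm
  have hmg : m ≤ g := Nat.find_le (Or.inr le_rfl)
  have hlow : ∀ k, k < m → ψ + k * (π/g) ≤ π/2 := by
    intro k hk
    have := Nat.find_min hex hk
    push_neg at this
    exact this.1
  have hhigh : ∀ k, m ≤ k → k < g → π/2 ≤ ψ + k * (π/g) := by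
    intro k hmk hkg
    have hspec := Nat.find_spec hex
    rw [← hm] at hspec
    rcases hspec with h | h
    · exact le_trans h.le (hmono m k hmk)
    · exact absurd (lt_of_le_of_lt hmk hkg) (not_lt.mpr h)
  have hgg : (g:ℝ) * (π/g) = π := by field_simp
  have hsplit : ∑ k ∈ range g, |Real.cos (ψ + k * (π / g))|
      = (∑ k ∈ range m, Real.cos (ψ + k * (π/g)))
        - ∑ k ∈ Finset.Ico m g, Real.cos (ψ + k * (π/g)) := by
    rw [range_eq_Ico, ← Finset.sum_Ico_consecutive _ (Nat.zero_le m) hmg]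
    have A : ∀ k ∈ Finset.Ico 0 m, |Real.cos (ψ + k * (π/g))| = Real.cos (ψ + k * (π/g)) := by
      intro k hk
      rw [Finset.mem_Ico] at hk
      refine abs_of_nonneg (Real.cos_nonneg_of_mem_Icc ⟨?_, hlow k hk.2⟩)
      have : (0:ℝ) ≤ (k:ℝ) * (π/g) := by positivity
      linarith
    have B : ∀ k ∈ Finset.Ico m g, |Real.cos (ψ + k * (π/g))| = -Real.cos (ψ + k * (π/g)) := by
      intro k hk
      rw [Finset.mem_Ico] at hk
      refine abs_of_nonpos (Real.cos_nonpos_of_pi_div_two_le_of_le (hhigh k hk.1 hk.2) ?_)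
      have hkg : (k:ℝ) ≤ g := by exact_mod_cast hk.2.le
      have hp : (0:ℝ) ≤ π/g := by positivity
      have : (k:ℝ) * (π/g) ≤ (g:ℝ) * (π/g) := mul_le_mul_of_nonneg_right hkg hp
      rw [hgg] at this
      linarith
    rw [Finset.sum_congr rfl A, Finset.sum_congr rfl B]
    rw [← range_eq_Ico, Finset.sum_neg_distrib]
    ring
  have T1 : 2 * Real.sin δ * ∑ k ∈ range m, Real.cos (ψ + k*(π/g)) = F m - F 0 := by
    rw [Finset.mul_sum]
    simp_rw [htel]
    exact Finset.sum_range_sub F m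
  have T2 : 2 * Real.sin δ * ∑ k ∈ Finset.Ico m g, Real.cos (ψ + k*(π/g)) = F g - F m := by
    rw [Finset.mul_sum]
    simp_rw [htel]
    rw [Finset.sum_Ico_eq_sub _ hmg, Finset.sum_range_sub F, Finset.sum_range_sub F]
    ring
  have hFg : F g = - F 0 := by
    rw [hF]
    simp only []
    rw [show ψ + (g:ℝ)*(π/g) - δ = (ψ - δ) + π by rw [hgg]; ring, Real.sin_add_pi]
    norm_num
  have hFm : F m ≤ 1 := Real.sin_le_one _
  rw [hsplit, le_div_iff₀ hsin]
  nlinarith [T1, T2, hFg, hFm]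

lemma aux_cos_sum_le (g : ℕ) (hg : 1 ≤ g) (ψ : ℝ) :
    ∑ k ∈ range g, |Real.cos (ψ + k * (π / g))| ≤ 1 / Real.sin (π / (2 * g)) := by
  have hπ := Real.pi_pos
  set n : ℤ := ⌊(ψ + π/2)/π⌋ with hn
  set ψ' : ℝ := ψ - n * π with hψ'
  have hb1 : (n:ℝ) ≤ (ψ + π/2)/π := Int.floor_le _
  have hb2 : (ψ + π/2)/π < n + 1 := Int.lt_floor_add_one _
  have h1 : -(π/2) ≤ ψ' := by
    rw [hψ']
    rw [le_div_iff₀ hπ] at hb1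
    linarith
  have h2 : ψ' < π/2 := by
    rw [hψ']
    rw [div_lt_iff₀ hπ] at hb2
    linarith
  have heq : ∀ k : ℕ, |Real.cos (ψ + k * (π / g))| = |Real.cos (ψ' + k * (π / g))| := by
    intro k
    rw [show ψ + k * (π/g) = (ψ' + k * (π/g)) + n * π by rw [hψ']; ring]
    exact aux_abs_cos_add_int_mul_pi _ n
  simp_rw [heq]
  exact aux_key_cos_sum g hg ψ' h1 h2

lemma aux_exp_real_mul_I (x : ℝ) :
    Complex.exp ((x:ℂ) * Complex.I) = (Real.cos x : ℂ) + (Real.sin x : ℂ) * Complex.I := by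
  rw [Complex.exp_mul_I]; norm_num [Complex.ofReal_cos, Complex.ofReal_sin]

lemma aux_abs_z_le (g : ℕ) (hg : 1 ≤ g) (ε : Fin g → ℝ) (hε : ∀ j, |ε j| ≤ 1) :
    ‖(∑ j : Fin g, (ε j : ℂ) *
        ((Real.cos (((j:ℕ)+1) * π / g) : ℂ) + (Real.sin (((j:ℕ)+1) * π / g) : ℂ) * Complex.I))‖
      ≤ 1 / Real.sin (π / (2 * g)) := by
  have hπ := Real.pi_pos
  have hg0 : (0:ℝ) < g := by exact_mod_cast hg
  have hδlt : π / (2*g) < π := by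
    rw [div_lt_iff₀ (by positivity)]
    have h1g : (1:ℝ) ≤ g := by exact_mod_cast hg
    nlinarith [mul_pos hπ hg0]
  have hsin : 0 < Real.sin (π / (2*g)) :=
    Real.sin_pos_of_pos_of_lt_pi (by positivity) hδlt
  set z := ∑ j : Fin g, (ε j : ℂ) *
      ((Real.cos (((j:ℕ)+1) * π / g) : ℂ) + (Real.sin (((j:ℕ)+1) * π / g) : ℂ) * Complex.I) with hz
  by_cases h0 : z = 0
  · rw [h0]; simp; positivity
  set φ := z.arg with hφ
  have habs : ((‖z‖ : ℝ) : ℂ) = z * Complex.exp (((-φ : ℝ):ℂ) * Complex.I) := by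
    conv_rhs => rw [← Complex.norm_mul_exp_arg_mul_I z]
    rw [mul_assoc, ← Complex.exp_add]
    push_cast
    ring_nf
    rw [← hφ, mul_comm (φ:ℂ), sub_self, Complex.exp_zero, mul_one]
  have hre : ‖z‖ = ∑ j : Fin g, ε j * Real.cos ((((j:ℕ)+1) * π / g) - φ) := by
    have := congrArg Complex.re habs
    rw [Complex.ofReal_re] at this
    rw [this, hz, Finset.sum_mul, Complex.re_sum]
    refine Finset.sum_congr rfl fun j _ => ?_
    rw [aux_exp_real_mul_I]
    have hterm : (ε j : ℂ) *
        ((Real.cos (((j:ℕ)+1) * π / g) : ℂ) + (Real.sin (((j:ℕ)+1) * π / g) : ℂ) * Complex.I) *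
        ((Real.cos (-φ) : ℂ) + (Real.sin (-φ) : ℂ) * Complex.I)
        = ((ε j * (Real.cos (((j:ℕ)+1) * π / g) * Real.cos (-φ)
              - Real.sin (((j:ℕ)+1) * π / g) * Real.sin (-φ)) : ℝ) : ℂ)
          + ((ε j * (Real.cos (((j:ℕ)+1) * π / g) * Real.sin (-φ)
              + Real.sin (((j:ℕ)+1) * π / g) * Real.cos (-φ)) : ℝ) : ℂ) * Complex.I := by
      push_cast
      ring_nf
      simp [Complex.I_sq]
    rw [hterm]
    simp only [Complex.add_re, Complex.ofReal_re, Complex.mul_re, Complex.I_re, Complex.I_im,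
      Complex.ofReal_im]
    rw [Real.cos_neg, Real.sin_neg, Real.cos_sub]
    ring
  rw [hre]
  calc ∑ j : Fin g, ε j * Real.cos ((((j:ℕ)+1) * π / g) - φ)
      ≤ ∑ j : Fin g, |Real.cos ((((j:ℕ)+1) * π / g) - φ)| := by
        refine Finset.sum_le_sum fun j _ => ?_
        calc ε j * Real.cos _ ≤ |ε j * Real.cos _| := le_abs_self _
          _ = |ε j| * |Real.cos _| := abs_mul _ _
          _ ≤ 1 * |Real.cos _| := by
              exact mul_le_mul_of_nonneg_right (hε j) (abs_nonneg _)
          _ = _ := one_mul _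
    _ = ∑ k ∈ range g, |Real.cos ((π/g - φ) + k * (π / g))| := by
        rw [Fin.sum_univ_eq_sum_range (fun k => |Real.cos (((k:ℕ)+1) * π / g - φ)|) g]
        refine Finset.sum_congr rfl fun k _ => ?_
        congr 1
        ring
    _ ≤ 1 / Real.sin (π / (2 * g)) := aux_cos_sum_le g hg _

lemma aux_psd_trace_nonneg {n : ℕ} {M : Matrix (Fin n) (Fin n) ℂ} (h : M.PosSemidef) :
    0 ≤ M.trace := by
  rw [Matrix.trace]
  refine Finset.sum_nonneg fun i _ => ?_
  have := h.dotProduct_mulVec_nonneg (Pi.single i 1)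
  simpa [Matrix.mulVec_single, dotProduct, Pi.single_apply] using this

lemma aux_psd_trace_mul_nonneg {n : ℕ} {A B : Matrix (Fin n) (Fin n) ℂ}
    (hA : A.PosSemidef) (hB : B.PosSemidef) : 0 ≤ (A * B).trace := by
  obtain ⟨C, rfl⟩ : ∃ C : Matrix (Fin n) (Fin n) ℂ, B = Cᴴ * C := by
    open scoped MatrixOrder in exact CStarAlgebra.nonneg_iff_eq_star_mul_self.mp hB.nonneg
  have h1 : (A * (Cᴴ * C)).trace = (C * A * Cᴴ).trace := by
    rw [← mul_assoc, Matrix.trace_mul_cycle]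
  rw [h1]
  exact aux_psd_trace_nonneg (hA.mul_mul_conjTranspose_same C)

lemma aux_one_sub_off_psd (c : ℂ) (hc : ‖c‖ ≤ 1) :
    ((1 : Matrix (Fin 2) (Fin 2) ℂ) - !![0, (starRingEnd ℂ) c; c, 0]).PosSemidef := by
  refine Matrix.PosSemidef.of_dotProduct_mulVec_nonneg ?_ ?_
  · unfold Matrix.IsHermitian
    ext i j
    fin_cases i <;> fin_cases j <;>
      simp [Matrix.conjTranspose_apply, Matrix.one_apply, Matrix.sub_apply]
  · intro x
    have hexp : dotProduct (star x) (((1 : Matrix (Fin 2) (Fin 2) ℂ)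
          - !![0, (starRingEnd ℂ) c; c, 0]) *ᵥ x)
        = ((Complex.normSq (x 0) + Complex.normSq (x 1)
            - 2 * (c * x 0 * (starRingEnd ℂ) (x 1)).re : ℝ) : ℂ) := by
      have m00 : (!![0, (starRingEnd ℂ) c; c, 0]) 0 0 = 0 := by norm_num
      have m01 : (!![0, (starRingEnd ℂ) c; c, 0]) 0 1 = (starRingEnd ℂ) c := by norm_num
      have m10 : (!![0, (starRingEnd ℂ) c; c, 0]) 1 0 = c := by norm_num
      have m11 : (!![0, (starRingEnd ℂ) c; c, 0]) 1 1 = 0 := by norm_num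
      simp only [dotProduct, Matrix.mulVec, Fin.sum_univ_two, Matrix.sub_apply,
        Matrix.one_apply, Pi.star_apply, Complex.star_def, m00, m01, m10, m11]
      have e0 : ((starRingEnd ℂ) (x 0)) * x 0 = (Complex.normSq (x 0) : ℂ) := by
        rw [mul_comm]; exact Complex.mul_conj (x 0)
      have e1 : ((starRingEnd ℂ) (x 1)) * x 1 = (Complex.normSq (x 1) : ℂ) := by
        rw [mul_comm]; exact Complex.mul_conj (x 1)
      have e2 : (c * x 0 * (starRingEnd ℂ) (x 1))
          + (starRingEnd ℂ) c * (starRingEnd ℂ) (x 0) * x 1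
          = 2 * ((c * x 0 * (starRingEnd ℂ) (x 1)).re : ℂ) := by
        have h := Complex.add_conj (c * x 0 * (starRingEnd ℂ) (x 1))
        rw [_root_.map_mul, _root_.map_mul, Complex.conj_conj] at h
        rw [h]
        push_cast
        ring
      push_cast
      linear_combination e0 + e1 - e2
    rw [hexp, Complex.zero_le_real]
    have hre : (c * x 0 * (starRingEnd ℂ) (x 1)).re
        ≤ ‖c‖ * ‖x 0‖ * ‖x 1‖ := by
      calc (c * x 0 * (starRingEnd ℂ) (x 1)).re
          ≤ ‖c * x 0 * (starRingEnd ℂ) (x 1)‖ := Complex.re_le_norm _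
        _ = ‖c‖ * ‖x 0‖ * ‖x 1‖ := by
            rw [norm_mul, norm_mul, Complex.norm_conj]
    have hsq0 : Complex.normSq (x 0) = ‖x 0‖ ^ 2 := (Complex.sq_norm _).symm
    have hsq1 : Complex.normSq (x 1) = ‖x 1‖ ^ 2 := (Complex.sq_norm _).symm
    have h0 : 0 ≤ ‖x 0‖ := norm_nonneg _
    have h1 : 0 ≤ ‖x 1‖ := norm_nonneg _
    nlinarith [sq_nonneg (‖x 0‖ - ‖x 1‖), mul_nonneg h0 h1]

lemma aux_sum_off_form (g : ℕ) (r a b : Fin g → ℝ) :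
    ∑ j, ((r j : ℝ) : ℂ) • ((a j : ℂ) • sigmaX + (b j : ℂ) • sigmaY)
      = !![0, (starRingEnd ℂ) (∑ j : Fin g, (r j : ℂ) * ((a j : ℂ) + (b j : ℂ) * Complex.I));
          ∑ j : Fin g, (r j : ℂ) * ((a j : ℂ) + (b j : ℂ) * Complex.I), 0] := by
  ext i k
  fin_cases i <;> fin_cases k <;>
    simp [Matrix.sum_apply, sigmaX, sigmaY, map_sum, Complex.conj_ofReal,
      Matrix.add_apply, Matrix.smul_apply, smul_eq_mul, _root_.map_mul, Complex.conj_I] <;>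
    refine Finset.sum_congr rfl fun j _ => ?_ <;> ring

lemma aux_off_trace_sq (a b : ℝ) (h : a^2 + b^2 = 1) :
    (((a : ℂ) • sigmaX + (b : ℂ) • sigmaY) * ((a : ℂ) • sigmaX + (b : ℂ) • sigmaY)).trace = 2 := by
  simp [sigmaX, sigmaY, Matrix.trace_fin_two, Matrix.mul_apply, Fin.sum_univ_two,
    Matrix.add_apply, Matrix.smul_apply, smul_eq_mul]
  have h' : ((a:ℂ))^2 + ((b:ℂ))^2 = 1 := by
    have := congrArg (fun x : ℝ => (x:ℂ)) h
    push_cast at this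
    exact this
  linear_combination (2:ℂ) * h' - (2 * ((b:ℂ))^2) * Complex.I_sq

end Aux

/-- If the planar qubit effects `E_j = (1/2)(I₂ + t_j X_j)` are jointly measurable as
binary POVMs `(E_j, I - E_j)`, then `∑ⱼ tⱼ ≤ 1/sin(π/(2g))`. -/
theorem stmt_15 (g : ℕ) (hg : 2 ≤ g) (t : Fin g → ℝ) (ht : ∀ j, t j ∈ Set.Icc (0 : ℝ) 1)
    (hJM : JointlyMeasurable (fun _ : Fin g => 2)
      (fun j v => if v = (0 : Fin 2)
        then ((1 / 2 : ℝ) : ℂ) • (1 + (t j : ℂ) • planarX g j)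
        else 1 - ((1 / 2 : ℝ) : ℂ) • (1 + (t j : ℂ) • planarX g j))) :
    ∑ j, t j ≤ 1 / Real.sin (Real.pi / (2 * g)) := by
  classical
  have hπ := Real.pi_pos
  have hg1 : 1 ≤ g := le_trans one_le_two hg
  have hg0 : (0:ℝ) < g := by exact_mod_cast hg1
  have hδlt : Real.pi / (2*g) < Real.pi := by
    rw [div_lt_iff₀ (by positivity)]
    have h1g : (1:ℝ) ≤ g := by exact_mod_cast hg1
    nlinarith [mul_pos hπ hg0]
  have hs : 0 < Real.sin (Real.pi / (2*g)) :=
    Real.sin_pos_of_pos_of_lt_pi (by positivity) hδlt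
  set s : ℝ := Real.sin (Real.pi / (2*g)) with hsdef
  obtain ⟨G, hpsd, hsum, hmarg⟩ := hJM
  -- sign function
  set ε : (∀ _ : Fin g, Fin 2) → Fin g → ℝ :=
    fun η j => if η j = 0 then 1 else -1 with hε
  have hεbd : ∀ η j, |ε η j| ≤ 1 := by
    intro η j
    rw [hε]
    by_cases h : η j = 0 <;> simp [h]
  -- Step 1 : signed marginals
  have h1 : ∀ j : Fin g, ∑ η, ((ε η j : ℝ) : ℂ) • G η = (t j : ℂ) • planarX g j := by
    intro j
    have hm := hmarg j 0
    simp only [if_pos] at hm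
    have htot := Finset.sum_filter_add_sum_filter_not Finset.univ
      (fun η : ∀ _ : Fin g, Fin 2 => η j = 0) G
    rw [hsum] at htot
    have hnot : ∑ η ∈ Finset.univ.filter (fun η : ∀ _ : Fin g, Fin 2 => ¬ (η j = 0)), G η
        = 1 - ∑ η ∈ Finset.univ.filter (fun η : ∀ _ : Fin g, Fin 2 => η j = 0), G η := by
      rw [← htot]; abel
    have hterm : ∀ η : ∀ _ : Fin g, Fin 2,
        ((ε η j : ℝ) : ℂ) • G η = (if η j = 0 then G η else -(G η)) := by
      intro η
      by_cases h : η j = 0 <;> simp [hε, h]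
    rw [Finset.sum_congr rfl (fun η _ => hterm η), Finset.sum_ite, Finset.sum_neg_distrib,
      hnot, ← hm]
    have hhalf : ((1 / 2 : ℝ) : ℂ) = (1/2 : ℂ) := by push_cast; ring
    rw [hhalf]
    module
  -- Step 2 : the witness matrices and their PSD property
  set cnum : (∀ _ : Fin g, Fin 2) → ℂ := fun η => ∑ j : Fin g, ((s * ε η j : ℝ) : ℂ) *
      ((Real.cos (((j:ℕ)+1) * Real.pi / g) : ℂ)
        + (Real.sin (((j:ℕ)+1) * Real.pi / g) : ℂ) * Complex.I) with hcnum
  have h2 : ∀ η, ‖cnum η‖ ≤ 1 := by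
    intro η
    have hfac : cnum η = (s : ℂ) * ∑ j : Fin g, ((ε η j : ℝ) : ℂ) *
        ((Real.cos (((j:ℕ)+1) * Real.pi / g) : ℂ)
          + (Real.sin (((j:ℕ)+1) * Real.pi / g) : ℂ) * Complex.I) := by
      rw [hcnum, Finset.mul_sum]
      refine Finset.sum_congr rfl fun j _ => ?_
      push_cast
      ring
    rw [hfac, norm_mul, Complex.norm_real, Real.norm_eq_abs, abs_of_pos hs]
    calc s * ‖(_ : ℂ)‖ ≤ s * (1 / s) := by
          exact mul_le_mul_of_nonneg_left (aux_abs_z_le g hg1 (ε η) (hεbd η)) hs.le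
      _ = 1 := by field_simp
  set A : (∀ _ : Fin g, Fin 2) → Matrix (Fin 2) (Fin 2) ℂ :=
    fun η => ∑ j, ((s * ε η j : ℝ) : ℂ) • planarX g j with hA
  have hform : ∀ η, A η = !![0, (starRingEnd ℂ) (cnum η); cnum η, 0] := by
    intro η
    rw [hA, hcnum]
    exact aux_sum_off_form g (fun j => s * ε η j)
      (fun j => Real.cos (((j:ℕ)+1) * Real.pi / g))
      (fun j => Real.sin (((j:ℕ)+1) * Real.pi / g))
  have h3 : ∀ η, (0:ℂ) ≤ ((1 - A η) * G η).trace := by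
    intro η
    refine aux_psd_trace_mul_nonneg ?_ (hpsd η)
    rw [hform η]
    exact aux_one_sub_off_psd (cnum η) (h2 η)
  -- Step 3 : trace bookkeeping
  have htrG : ∑ η, (G η).trace = 2 := by
    rw [← Matrix.trace_sum, hsum, Matrix.trace_one]
    simp
  have htrX : ∀ j : Fin g, (planarX g j * ((t j : ℂ) • planarX g j)).trace = 2 * (t j : ℂ) := by
    intro j
    rw [Matrix.mul_smul, Matrix.trace_smul]
    have : (planarX g j * planarX g j).trace = 2 := by
      have hpc : Real.cos (((j:ℕ)+1) * Real.pi / g) ^ 2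
          + Real.sin (((j:ℕ)+1) * Real.pi / g) ^ 2 = 1 := by
        have := Real.sin_sq_add_cos_sq (((j:ℕ)+1) * Real.pi / g)
        linarith
      simpa [planarX] using aux_off_trace_sq (Real.cos (((j:ℕ)+1) * Real.pi / g))
        (Real.sin (((j:ℕ)+1) * Real.pi / g)) hpc
    rw [this, smul_eq_mul]
    ring
  have htrA : ∑ η, (A η * G η).trace = ((2 * s * ∑ j, t j : ℝ) : ℂ) := by
    have hswap : ∑ η, (A η * G η).trace
        = ∑ j : Fin g, (s:ℂ) * (planarX g j * (∑ η, ((ε η j : ℝ) : ℂ) • G η)).trace := by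
      have hAG : ∀ η, (A η * G η).trace
          = ∑ j : Fin g, (s:ℂ) * (((ε η j : ℝ) : ℂ) * (planarX g j * G η).trace) := by
        intro η
        rw [hA, Finset.sum_mul, Matrix.trace_sum]
        refine Finset.sum_congr rfl fun j _ => ?_
        rw [Matrix.smul_mul, Matrix.trace_smul, smul_eq_mul]
        push_cast
        ring
      rw [Finset.sum_congr rfl (fun η _ => hAG η), Finset.sum_comm]
      refine Finset.sum_congr rfl fun j _ => ?_
      rw [Matrix.mul_sum, Matrix.trace_sum, Finset.mul_sum]
      refine Finset.sum_congr rfl fun η _ => ?_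
      rw [Matrix.mul_smul, Matrix.trace_smul, smul_eq_mul]
    rw [hswap]
    have : ∀ j : Fin g, (s:ℂ) * (planarX g j * (∑ η, ((ε η j : ℝ) : ℂ) • G η)).trace
        = (s:ℂ) * (2 * (t j : ℂ)) := by
      intro j
      rw [h1 j, htrX j]
    rw [Finset.sum_congr rfl (fun j _ => this j)]
    have hrhs : ((2 * s * ∑ j, t j : ℝ) : ℂ) = ∑ j : Fin g, (s:ℂ) * (2 * (t j:ℂ)) := by
      push_cast
      rw [Finset.mul_sum]
      refine Finset.sum_congr rfl fun j _ => by ring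
    rw [hrhs]
  -- Step 4 : combine
  have hkey : (0:ℂ) ≤ ((2 - 2 * s * ∑ j, t j : ℝ) : ℂ) := by
    have hsplit : ∑ η, ((1 - A η) * G η).trace = ((2 - 2 * s * ∑ j, t j : ℝ) : ℂ) := by
      have : ∀ η : ∀ _ : Fin g, Fin 2, ((1 - A η) * G η).trace
          = (G η).trace - (A η * G η).trace := by
        intro η
        rw [Matrix.sub_mul, Matrix.one_mul, Matrix.trace_sub]
      rw [Finset.sum_congr rfl (fun η _ => this η), Finset.sum_sub_distrib, htrG, htrA]
      push_cast
      ring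
    rw [← hsplit]
    exact Finset.sum_nonneg fun η _ => h3 η
  rw [Complex.zero_le_real] at hkey
  rw [le_div_iff₀ hs]
  nlinarith [hkey]
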